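/- Let J₁, J₂, J₃ be d×d complex matrices satisfying J_iJ_j − J_jJ_i = i·Σ_k ε_{ijk}J_k, and let θ ∈ ℝ³ with θ ≠ 0; write ‖θ‖ for the Euclidean norm, θ·J := θ₁J₁+θ₂J₂+θ₃J₃, and e_j for the j-th standard basis vector of ℝ³. Then for each j = 1,2,3: ∫₀¹ exp(iα(θ·J)) J_j exp(−iα(θ·J)) dα = (sin‖θ‖/‖θ‖)·J_j + (1 − sin‖θ‖/‖θ‖)·(θ_j/‖θ‖²)·(θ·J) + (2 sin²(‖θ‖/2)/‖θ‖²)·((e_j × θ)·J), where e_j × θ is the cross product. -/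

import Mathlib

open Matrix

attribute [local instance] Matrix.frobeniusNormedAddCommGroup Matrix.frobeniusNormedSpace

attribute [local instance] Matrix.frobeniusNormedRing Matrix.frobeniusNormedAlgebra

/-- The Levi-Civita symbol on `Fin 3`: `ε_{ijk} = (j−i)(k−j)(k−i)/2`. -/
noncomputable def levi (i j k : Fin 3) : ℝ :=
  ((((j : ℤ) - (i : ℤ)) * ((k : ℤ) - (j : ℤ)) * ((k : ℤ) - (i : ℤ)) : ℤ) : ℝ) / 2

/-- `u·J := u₁J₁ + u₂J₂ + u₃J₃` for a real vector `u` and matrices `J`. -/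
noncomputable def dotJ {d : ℕ} (J : Fin 3 → Matrix (Fin d) (Fin d) ℂ) (u : Fin 3 → ℝ) :
    Matrix (Fin d) (Fin d) ℂ :=
  ∑ i, (u i : ℂ) • J i

/-- The Euclidean norm on `ℝ³`. -/
noncomputable def enorm' (u : Fin 3 → ℝ) : ℝ := Real.sqrt (∑ i, u i ^ 2)

section Aux

variable {d : ℕ} (J : Fin 3 → Matrix (Fin d) (Fin d) ℂ)

lemma dotJ_single (j : Fin 3) : dotJ J (Pi.single j 1) = J j := by
  simp [dotJ, Pi.single_apply]

lemma dotJ_sub (u v : Fin 3 → ℝ) : dotJ J (u - v) = dotJ J u - dotJ J v := by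
  simp [dotJ, sub_smul, Finset.sum_sub_distrib]

lemma dotJ_smul (c : ℝ) (u : Fin 3 → ℝ) : dotJ J (c • u) = (c : ℂ) • dotJ J u := by
  simp only [dotJ, Pi.smul_apply, smul_eq_mul, Complex.ofReal_mul, Finset.smul_sum, smul_smul]

lemma dotJ_neg (u : Fin 3 → ℝ) : dotJ J (-u) = - dotJ J u := by
  simp [dotJ]

lemma cross_special (u : Fin 3 → ℝ) (j : Fin 3) :
    crossProduct u (crossProduct (Pi.single j 1) u)
      = (∑ i, u i ^ 2) • (Pi.single j 1 : Fin 3 → ℝ) - u j • u := by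
  funext k
  fin_cases j <;> fin_cases k <;>
    simp [cross_apply, Fin.sum_univ_three, Pi.single_apply] <;> ring

lemma comm_dotJ
    (hcomm : ∀ i j, J i * J j - J j * J i = Complex.I • ∑ k, (levi i j k : ℂ) • J k)
    (u v : Fin 3 → ℝ) :
    dotJ J u * dotJ J v - dotJ J v * dotJ J u
      = Complex.I • dotJ J (crossProduct u v) := by
  have h10 := (sub_sub_cancel (J 0 * J 1) (J 1 * J 0)).symm.trans (by rw [hcomm 0 1])
  have h20 := (sub_sub_cancel (J 0 * J 2) (J 2 * J 0)).symm.trans (by rw [hcomm 0 2])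
  have h21 := (sub_sub_cancel (J 1 * J 2) (J 2 * J 1)).symm.trans (by rw [hcomm 1 2])
  simp only [dotJ, Fin.sum_univ_three, cross_apply, add_mul, mul_add, smul_mul_assoc,
    mul_smul_comm, smul_smul, Matrix.cons_val_zero, Matrix.cons_val_one, Matrix.head_cons,
    Matrix.cons_val_two, Matrix.tail_cons]
  rw [h10, h20, h21]
  simp only [Fin.sum_univ_three]
  norm_num [levi]
  match_scalars <;> (simp only [Complex.coe_algebraMap]; push_cast; ring)

end Aux

private lemma hasDerivAt_comp_ofReal' {E : Type*} [NormedAddCommGroup E] [NormedSpace ℂ E]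
    {e : ℂ → E} {e' : E} {z : ℝ} (hf : HasDerivAt e e' (z : ℂ)) :
    HasDerivAt (fun y : ℝ => e (y : ℂ)) e' z := by
  simpa only [Complex.ofRealCLM_apply, Complex.ofReal_one, one_smul, Function.comp_def] using
    hf.scomp z Complex.ofRealCLM.hasDerivAt

/-- For matrices satisfying the su(2) commutation relations and `θ ≠ 0`,
`∫₀¹ exp(iα θ·J) J_j exp(−iα θ·J) dα = (sin‖θ‖/‖θ‖)J_j
  + (1 − sin‖θ‖/‖θ‖)(θ_j/‖θ‖²)(θ·J) + (2sin²(‖θ‖/2)/‖θ‖²)((e_j × θ)·J)`. -/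
theorem su2_sld_integral {d : ℕ}
    (J : Fin 3 → Matrix (Fin d) (Fin d) ℂ)
    (hcomm : ∀ i j, J i * J j - J j * J i = Complex.I • ∑ k, (levi i j k : ℂ) • J k)
    (θ : Fin 3 → ℝ) (hθ : θ ≠ 0) (j : Fin 3) :
    (∫ α in (0 : ℝ)..1,
        NormedSpace.exp ((Complex.I * (α : ℂ)) • dotJ J θ) * J j *
          NormedSpace.exp ((-(Complex.I * (α : ℂ))) • dotJ J θ))
      = ((Real.sin (enorm' θ) / enorm' θ : ℝ) : ℂ) • J j
        + (((1 - Real.sin (enorm' θ) / enorm' θ) * (θ j / (enorm' θ) ^ 2) : ℝ) : ℂ) •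
            dotJ J θ
        + ((2 * Real.sin (enorm' θ / 2) ^ 2 / (enorm' θ) ^ 2 : ℝ) : ℂ) •
            dotJ J (crossProduct (Pi.single j 1) θ) := by
  -- basic notation
  set n : ℝ := enorm' θ with hn_def
  set T : Matrix (Fin d) (Fin d) ℂ := dotJ J θ with hT_def
  set C : Matrix (Fin d) (Fin d) ℂ := dotJ J (crossProduct (Pi.single j 1) θ) with hC_def
  have hsum_pos : 0 < ∑ i, θ i ^ 2 := by
    obtain ⟨i, hi⟩ := Function.ne_iff.mp hθ
    exact Finset.sum_pos' (fun _ _ => sq_nonneg _)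
      ⟨i, Finset.mem_univ i, sq_pos_iff.mpr hi⟩
  have hn : 0 < n := Real.sqrt_pos.mpr hsum_pos
  have hn0 : n ≠ 0 := hn.ne'
  have hn2 : n ^ 2 = ∑ i, θ i ^ 2 := Real.sq_sqrt hsum_pos.le
  -- commutators
  have hTJ : T * J j - J j * T = (-Complex.I) • C := by
    have h := comm_dotJ J hcomm θ (Pi.single j 1)
    rw [dotJ_single] at h
    rw [h, ← cross_anticomm, dotJ_neg, smul_neg, neg_smul]
  have hTC : T * C - C * T
      = Complex.I • (((n ^ 2 : ℝ) : ℂ) • J j - ((θ j : ℝ) : ℂ) • T) := by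
    have h := comm_dotJ J hcomm θ (crossProduct (Pi.single j 1) θ)
    rw [h, cross_special, dotJ_sub, dotJ_smul, dotJ_smul, dotJ_single, hn2]
  set A : Matrix (Fin d) (Fin d) ℂ := Complex.I • T with hA_def
  -- the candidate value of the conjugation
  set F : ℝ → Matrix (Fin d) (Fin d) ℂ := fun α =>
    ((Real.cos (n * α) : ℝ) : ℂ) • J j
      + ((θ j * (1 - Real.cos (n * α)) / n ^ 2 : ℝ) : ℂ) • T
      + ((Real.sin (n * α) / n : ℝ) : ℂ) • C with hF_def
  -- derivative of F
  have hF : ∀ α : ℝ, HasDerivAt F (A * F α - F α * A) α := by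
    intro α
    have h1 : HasDerivAt (fun s : ℝ => Real.cos (n * s)) (-Real.sin (n * α) * n) α := by
      simpa [Function.comp_def] using (Real.hasDerivAt_cos (n * α)).comp α ((hasDerivAt_id α).const_mul n)
    have h1s : HasDerivAt (fun s : ℝ => Real.sin (n * s)) (Real.cos (n * α) * n) α := by
      simpa [Function.comp_def] using (Real.hasDerivAt_sin (n * α)).comp α ((hasDerivAt_id α).const_mul n)
    have h2 : HasDerivAt (fun s : ℝ => θ j * (1 - Real.cos (n * s)) / n ^ 2)
        (θ j * (Real.sin (n * α) * n) / n ^ 2) α := by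
      have := (((h1.const_sub 1).const_mul (θ j)).div_const (n ^ 2))
      refine this.congr_deriv ?_
      ring
    have h3 : HasDerivAt (fun s : ℝ => Real.sin (n * s) / n)
        (Real.cos (n * α) * n / n) α := h1s.div_const n
    have H : HasDerivAt F
        (((-Real.sin (n * α) * n : ℝ) : ℂ) • J j
          + ((θ j * (Real.sin (n * α) * n) / n ^ 2 : ℝ) : ℂ) • T
          + ((Real.cos (n * α) * n / n : ℝ) : ℂ) • C) α :=
      ((h1.ofReal_comp.smul_const (J j)).add (h2.ofReal_comp.smul_const T)).add
        (h3.ofReal_comp.smul_const C)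
    have key : ((-Real.sin (n * α) * n : ℝ) : ℂ) • J j
          + ((θ j * (Real.sin (n * α) * n) / n ^ 2 : ℝ) : ℂ) • T
          + ((Real.cos (n * α) * n / n : ℝ) : ℂ) • C
        = A * F α - F α * A := by
      have e1 : T * J j = (-Complex.I) • C + J j * T := sub_eq_iff_eq_add.mp hTJ
      have e2 : T * C = Complex.I • (((n ^ 2 : ℝ) : ℂ) • J j - ((θ j : ℝ) : ℂ) • T)
          + C * T := sub_eq_iff_eq_add.mp hTC
      simp only [hF_def, hA_def, mul_add, add_mul, smul_mul_assoc, mul_smul_comm,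
        smul_sub, smul_smul, e1, e2, smul_add]
      have hnC : (n : ℂ) ≠ 0 := Complex.ofReal_ne_zero.mpr hn0
      match_scalars <;> (try push_cast) <;> (try field_simp) <;> (try ring_nf) <;>
        (try simp [Complex.I_sq]) <;> (try ring)
    exact key ▸ H
  -- exponentials
  have hEp : ∀ α : ℝ, HasDerivAt (fun s : ℝ => NormedSpace.exp ((s : ℂ) • A))
      (NormedSpace.exp ((α : ℂ) • A) * A) α := fun α =>
    hasDerivAt_comp_ofReal' (_root_.hasDerivAt_exp_smul_const A (α : ℂ))
  have hEm : ∀ α : ℝ, HasDerivAt (fun s : ℝ => NormedSpace.exp ((s : ℂ) • (-A)))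
      ((-A) * NormedSpace.exp ((α : ℂ) • (-A))) α := fun α =>
    hasDerivAt_comp_ofReal' (_root_.hasDerivAt_exp_smul_const' (-A) (α : ℂ))
  set g : ℝ → Matrix (Fin d) (Fin d) ℂ := fun α =>
    NormedSpace.exp ((α : ℂ) • (-A)) * F α * NormedSpace.exp ((α : ℂ) • A) with hg_def
  have hcm : ∀ α : ℝ, Commute A (NormedSpace.exp ((α : ℂ) • (-A))) :=
    fun α => (((Commute.refl A).neg_right).smul_right (α : ℂ)).exp_right
  have hcp : ∀ α : ℝ, Commute A (NormedSpace.exp ((α : ℂ) • A)) :=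
    fun α => ((Commute.refl A).smul_right (α : ℂ)).exp_right
  have hg : ∀ α : ℝ, HasDerivAt g 0 α := by
    intro α
    have h := ((hEm α).mul (hF α)).mul (hEp α)
    refine h.congr_deriv ?_
    rw [Pi.mul_apply]
    set Em := NormedSpace.exp ((α : ℂ) • (-A))
    set Ep := NormedSpace.exp ((α : ℂ) • A)
    have c1 : A * Em = Em * A := hcm α
    have c2 : A * Ep = Ep * A := hcp α
    rw [neg_mul, c1, ← c2]
    noncomm_ring
  have hconst : ∀ x y : ℝ, g x = g y :=
    fun x y => is_const_of_deriv_eq_zero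
      (fun α => (hg α).differentiableAt) (fun α => (hg α).deriv) x y
  have hg0 : g 0 = J j := by
    simp [hg_def, hF_def, NormedSpace.exp_zero]
  -- exp(x)*exp(-x) = 1
  have hinv : ∀ α : ℝ, NormedSpace.exp ((α : ℂ) • A) *
      NormedSpace.exp ((α : ℂ) • (-A)) = 1 := by
    intro α
    rw [← Matrix.exp_add_of_commute _ _ (((Commute.refl A).neg_right).smul_left
      (α : ℂ) |>.smul_right (α : ℂ))]
    simp [smul_neg, NormedSpace.exp_zero]
  have hinv' : ∀ α : ℝ, NormedSpace.exp ((α : ℂ) • (-A)) *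
      NormedSpace.exp ((α : ℂ) • A) = 1 := by
    intro α
    rw [← Matrix.exp_add_of_commute _ _ (((Commute.refl A).neg_left).smul_left
      (α : ℂ) |>.smul_right (α : ℂ))]
    simp [smul_neg, NormedSpace.exp_zero]
  -- conjugation formula
  have conj : ∀ α : ℝ,
      NormedSpace.exp ((Complex.I * (α : ℂ)) • T) * J j *
        NormedSpace.exp ((-(Complex.I * (α : ℂ))) • T) = F α := by
    intro α
    have eq1 : (Complex.I * (α : ℂ)) • T = (α : ℂ) • A := by
      rw [hA_def, smul_smul, mul_comm]
    have eq2 : (-(Complex.I * (α : ℂ))) • T = (α : ℂ) • (-A) := by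
      rw [hA_def, neg_smul, smul_neg, smul_smul, mul_comm]
    rw [eq1, eq2]
    have h := (hconst α 0).trans hg0
    calc NormedSpace.exp ((α : ℂ) • A) * J j * NormedSpace.exp ((α : ℂ) • (-A))
        = NormedSpace.exp ((α : ℂ) • A) * g α * NormedSpace.exp ((α : ℂ) • (-A)) := by
          rw [h]
      _ = (NormedSpace.exp ((α : ℂ) • A) * NormedSpace.exp ((α : ℂ) • (-A))) * F α *
            (NormedSpace.exp ((α : ℂ) • A) * NormedSpace.exp ((α : ℂ) • (-A))) := by
          rw [hg_def]
          noncomm_ring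
      _ = F α := by rw [hinv α]; noncomm_ring
  rw [intervalIntegral.integral_congr (fun α _ => conj α)]
  -- continuity facts
  have c1 : Continuous fun α : ℝ => ((Real.cos (n * α) : ℝ) : ℂ) :=
    Complex.continuous_ofReal.comp (Real.continuous_cos.comp (continuous_const.mul continuous_id))
  have c2 : Continuous fun α : ℝ => ((θ j * (1 - Real.cos (n * α)) / n ^ 2 : ℝ) : ℂ) := by
    apply Complex.continuous_ofReal.comp
    exact ((continuous_const.mul ((continuous_const.sub
      (Real.continuous_cos.comp (continuous_const.mul continuous_id))))).div_const _)
  have c3 : Continuous fun α : ℝ => ((Real.sin (n * α) / n : ℝ) : ℂ) := by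
    apply Complex.continuous_ofReal.comp
    exact ((Real.continuous_sin.comp (continuous_const.mul continuous_id)).div_const _)
  rw [hF_def]
  rw [intervalIntegral.integral_add (((c1.fun_smul continuous_const).fun_add
        (c2.fun_smul continuous_const)).intervalIntegrable 0 1)
      ((c3.fun_smul continuous_const).intervalIntegrable 0 1),
    intervalIntegral.integral_add ((c1.fun_smul continuous_const).intervalIntegrable 0 1)
      ((c2.fun_smul continuous_const).intervalIntegrable 0 1),
    intervalIntegral.integral_smul_const, intervalIntegral.integral_smul_const,
    intervalIntegral.integral_smul_const, intervalIntegral.integral_ofReal,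
    intervalIntegral.integral_ofReal, intervalIntegral.integral_ofReal]
  -- the three scalar integrals
  have I1 : (∫ α in (0:ℝ)..1, Real.cos (n * α)) = Real.sin n / n := by
    rw [intervalIntegral.integral_comp_mul_left Real.cos hn0]
    simp [integral_cos, div_eq_inv_mul]
  have I1s : (∫ α in (0:ℝ)..1, Real.sin (n * α)) = (1 - Real.cos n) / n := by
    rw [intervalIntegral.integral_comp_mul_left Real.sin hn0]
    simp [integral_sin, div_eq_inv_mul]
  have ccos : Continuous fun α : ℝ => Real.cos (n * α) := by fun_prop
  have I2 : (∫ α in (0:ℝ)..1, θ j * (1 - Real.cos (n * α)) / n ^ 2)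
      = θ j * (1 - Real.sin n / n) / n ^ 2 := by
    have : (fun α : ℝ => θ j * (1 - Real.cos (n * α)) / n ^ 2)
        = fun α : ℝ => (θ j / n ^ 2) * (1 - Real.cos (n * α)) := by
      funext α; ring
    rw [this, intervalIntegral.integral_const_mul, intervalIntegral.integral_sub
      intervalIntegrable_const (ccos.intervalIntegrable 0 1), I1]
    simp
    ring
  have I3 : (∫ α in (0:ℝ)..1, Real.sin (n * α) / n) = (1 - Real.cos n) / n ^ 2 := by
    rw [intervalIntegral.integral_div, I1s]
    ring
  rw [I1, I2, I3]
  -- final matching of the coefficients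
  have hhalf : 1 - Real.cos n = 2 * Real.sin (n / 2) ^ 2 := by
    have h1 : Real.cos (2 * (n / 2)) = 2 * Real.cos (n / 2) ^ 2 - 1 := Real.cos_two_mul _
    have h2 := Real.sin_sq_add_cos_sq (n / 2)
    rw [show 2 * (n / 2) = n by ring] at h1
    nlinarith
  rw [show (1 - Real.cos n) / n ^ 2 = 2 * Real.sin (n / 2) ^ 2 / n ^ 2 by rw [hhalf],
    show θ j * (1 - Real.sin n / n) / n ^ 2 = (1 - Real.sin n / n) * (θ j / n ^ 2) by ring]
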